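/- The generating function G(z) = ∑_{n≥0} (1/(rn+1)) * C(rn+1, n) * z^n of Fuss–Catalan numbers satisfies the functional equation G(z) = 1 + z * G(z)^r, for r ≥ 1, as formal power series. -/

import Mathlib

open PowerSeries Finset

namespace FussCatAux

/-- generalized binomial coefficient over ℚ -/
noncomputable def bq (x : ℚ) (n : ℕ) : ℚ := (∏ i ∈ Finset.range n, (x - i)) / (n.factorial : ℚ)

lemma bq_zero (x : ℚ) : bq x 0 = 1 := by simp [bq]

lemma fact_ne (n : ℕ) : ((n.factorial : ℚ)) ≠ 0 := by
  exact_mod_cast n.factorial_ne_zero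

lemma bq_succ (x : ℚ) (n : ℕ) : ((n:ℚ)+1) * bq x (n+1) = (x - n) * bq x n := by
  unfold bq
  rw [Finset.prod_range_succ, Nat.factorial_succ]
  push_cast
  field_simp

lemma prod_shift (x : ℚ) (n : ℕ) :
    x * ∏ i ∈ Finset.range n, (x - 1 - i) = (x - n) * ∏ i ∈ Finset.range n, (x - i) := by
  have h1 : ∏ i ∈ Finset.range (n+1), (x - i) = (∏ i ∈ Finset.range n, (x - ((i:ℕ)+1:ℕ))) * (x - (0:ℕ)) :=
    Finset.prod_range_succ' _ _
  have h2 : ∏ i ∈ Finset.range (n+1), (x - i) = (∏ i ∈ Finset.range n, (x - i)) * (x - n) :=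
    Finset.prod_range_succ _ _
  have h3 : ∏ i ∈ Finset.range n, (x - 1 - (i:ℚ)) = ∏ i ∈ Finset.range n, (x - ((i:ℕ)+1:ℕ)) :=
    Finset.prod_congr rfl (fun i _ => by push_cast; ring)
  rw [h3]
  have := h1.symm.trans h2
  push_cast at this ⊢
  linear_combination this

lemma bq_shift (x : ℚ) (n : ℕ) : x * bq (x-1) n = (x - n) * bq x n := by
  unfold bq
  have h := prod_shift x n
  field_simp
  linear_combination h

lemma bq_pascal (x : ℚ) (n : ℕ) : bq x (n+1) = bq (x-1) (n+1) + bq (x-1) n := by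
  have hn : ((n:ℚ)+1) ≠ 0 := by positivity
  apply mul_left_cancel₀ hn
  have h1 := bq_succ x n
  have h2 := bq_succ (x-1) n
  have h3 := bq_shift x n
  ring_nf
  ring_nf at h1 h2 h3
  linear_combination h1 - h2 - h3

end FussCatAux
namespace FussCatAux

lemma prod_natCast (N n : ℕ) :
    (∏ i ∈ Finset.range n, ((N:ℚ) - i)) = (N.descFactorial n : ℚ) := by
  induction n with
  | zero => simp
  | succ n ih =>
    rw [Finset.prod_range_succ, ih, Nat.descFactorial_succ]
    rcases le_or_gt n N with h | h
    · push_cast [Nat.cast_sub h]; ring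
    · rw [Nat.sub_eq_zero_of_le h.le]
      have : N.descFactorial n = 0 := Nat.descFactorial_eq_zero_iff_lt.mpr h
      simp [this]

lemma bq_natCast (N n : ℕ) : bq (N:ℚ) n = (N.choose n : ℚ) := by
  unfold bq
  rw [prod_natCast, Nat.choose_eq_descFactorial_div_factorial,
    Nat.cast_div (Nat.factorial_dvd_descFactorial N n) (fact_ne n)]

variable (r : ℕ)

/-- `Aq r a n` is a polynomial-in-`a` version of `(a/(a+rn)) C(a+rn, n)`. -/
noncomputable def Aq (a : ℚ) : ℕ → ℚ
  | 0 => 1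
  | (k+1) => bq (a + r*((k:ℚ)+1)) (k+1) - r * bq (a + r*((k:ℚ)+1) - 1) k

lemma Aq_zero' (a : ℚ) : Aq r a 0 = 1 := rfl

lemma bq_one (x : ℚ) : bq x 1 = x := by
  have := bq_succ x 0
  simpa [bq_zero] using this

lemma Aq_pascal (a : ℚ) (k : ℕ) :
    Aq r (a+1) (k+1) = Aq r a (k+1) + Aq r (a + r) k := by
  cases k with
  | zero =>
    simp only [Aq]
    norm_num [bq_one, bq_zero]
  | succ j =>
    simp only [Aq]
    have h1 := bq_pascal (a + 1 + r*((j:ℚ)+1+1)) (j+1)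
    have h2 := bq_pascal (a + r*((j:ℚ)+1+1)) j
    push_cast at h1 h2 ⊢
    ring_nf at h1 h2 ⊢
    linear_combination (norm := ring_nf) h1 - (r:ℚ) * h2

lemma Aq_a_zero (k : ℕ) : Aq r 0 (k+1) = 0 := by
  have hk : ((k:ℚ)+1) ≠ 0 := by positivity
  have h1 := bq_succ ((r:ℚ)*((k:ℚ)+1)) k
  have h2 := bq_shift ((r:ℚ)*((k:ℚ)+1)) k
  simp only [Aq]
  apply mul_left_cancel₀ hk
  ring_nf
  ring_nf at h1 h2
  linear_combination (norm := ring_nf) h1 - h2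

end FussCatAux
namespace FussCatAux

lemma HR (r : ℕ) : ∀ (n : ℕ) (c : ℕ) (a : ℚ),
    ∑ k ∈ Finset.range (n+1), Aq r a (n-k) * Aq r (c:ℚ) k = Aq r (a + c) n := by
  intro n
  induction n using Nat.strong_induction_on with
  | _ n ih =>
    intro c
    induction c with
    | zero =>
      intro a
      rw [Finset.sum_eq_single 0]
      · simp [Aq_zero']
      · intro b _ hb
        obtain ⟨k, rfl⟩ := Nat.exists_eq_succ_of_ne_zero hb
        rw [Nat.cast_zero, Aq_a_zero, mul_zero]
      · intro h; simp at h
    | succ c ihc =>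
      intro a
      cases n with
      | zero => simp [Aq_zero']
      | succ j =>
        have step : ∀ k, Aq r ((c:ℚ)+1) (k+1) = Aq r (c:ℚ) (k+1) + Aq r ((c:ℚ) + r) k :=
          fun k => Aq_pascal r (c:ℚ) k
        have reassemble : ∑ k ∈ Finset.range (j+2), Aq r a (j+1-k) * Aq r (c:ℚ) k
            = (∑ k ∈ Finset.range (j+1), Aq r a (j-k) * Aq r (c:ℚ) (k+1))
              + Aq r a (j+1) * Aq r (c:ℚ) 0 := by
          rw [Finset.sum_range_succ']
          simp only [Nat.succ_sub_succ, Nat.sub_zero]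
        push_cast
        rw [Finset.sum_range_succ']
        simp only [Nat.succ_sub_succ, Nat.sub_zero]
        have expand : ∀ k ∈ Finset.range (j+1),
            Aq r a (j-k) * Aq r ((c:ℚ)+1) (k+1)
              = Aq r a (j-k) * Aq r (c:ℚ) (k+1) + Aq r a (j-k) * Aq r ((c:ℚ)+r) k :=
          fun k _ => by rw [step k]; ring
        rw [Finset.sum_congr rfl expand, Finset.sum_add_distrib]
        have e1 := ihc a
        rw [show ((j:ℕ)+1+1) = j+2 from rfl, reassemble] at e1
        have e2 := ih j (by omega) (c+r) a
        push_cast at e2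
        have e3 := Aq_pascal r (a + (c:ℚ)) j
        have h0 : Aq r ((c:ℚ)+1) 0 = Aq r (c:ℚ) 0 := rfl
        rw [h0]
        rw [show a + ((c:ℚ) + (r:ℚ)) = a + (c:ℚ) + (r:ℚ) from by ring] at e2
        rw [show a + ((c:ℚ)+1) = a + (c:ℚ) + 1 from by ring]
        linear_combination e1 + e2 - e3

end FussCatAux
namespace FussCatAux

noncomputable def fc (r n : ℕ) : ℚ := ((r * n + 1 : ℕ) : ℚ)⁻¹ * (Nat.choose (r * n + 1) n : ℚ)

lemma key (r m : ℕ) :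
    ((m:ℚ)+1) * bq ((r:ℚ)*((m:ℚ)+1)+1) (m+1) = ((r:ℚ)*((m:ℚ)+1)+1) * bq ((r:ℚ)*((m:ℚ)+1)) m := by
  have h1 := bq_succ ((r:ℚ)*((m:ℚ)+1)+1) m
  have h2 := bq_shift ((r:ℚ)*((m:ℚ)+1)+1) m
  rw [show (r:ℚ)*((m:ℚ)+1)+1-1 = (r:ℚ)*((m:ℚ)+1) from by ring] at h2
  linear_combination h1 - h2

lemma fc_zero (r : ℕ) : fc r 0 = 1 := by simp [fc]

lemma fc_eq_Aq_one (r : ℕ) (n : ℕ) : fc r n = Aq r 1 n := by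
  cases n with
  | zero => simp [fc, Aq_zero']
  | succ m =>
    have hcast : ((r * (m+1) + 1 : ℕ) : ℚ) = (r:ℚ)*((m:ℚ)+1)+1 := by push_cast; ring
    have hx1 : ((r:ℚ)*((m:ℚ)+1)+1) ≠ 0 := by positivity
    have hm1 : ((m:ℚ)+1) ≠ 0 := by positivity
    have k := key r m
    unfold fc
    rw [← bq_natCast, hcast]
    simp only [Aq]
    rw [show (1:ℚ) + (r:ℚ)*((m:ℚ)+1) = (r:ℚ)*((m:ℚ)+1)+1 from by ring,
      show (r:ℚ)*((m:ℚ)+1)+1-1 = (r:ℚ)*((m:ℚ)+1) from by ring]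
    rw [inv_mul_eq_div, div_eq_iff hx1]
    apply mul_left_cancel₀ hm1
    linear_combination (-(r:ℚ)*((m:ℚ)+1)) * k

lemma fc_eq_Aq_r (r : ℕ) (hr : 1 ≤ r) (n : ℕ) : fc r (n+1) = Aq r (r:ℚ) n := by
  have hr' : (0:ℚ) < r := by exact_mod_cast hr
  cases n with
  | zero =>
    show fc r 1 = 1
    unfold fc
    rw [show r*1+1 = r+1 from by ring, Nat.choose_one_right,
      inv_mul_eq_div, div_self (Nat.cast_ne_zero.mpr (Nat.succ_ne_zero r))]
  | succ m =>
    set X : ℚ := (r:ℚ)*((m:ℚ)+2) with hXdef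
    have hX : (0:ℚ) < X := by positivity
    have hXne : X ≠ 0 := ne_of_gt hX
    have hX1 : X + 1 ≠ 0 := by positivity
    have k' := key r (m+1)
    push_cast at k'
    rw [show (r:ℚ)*((m:ℚ)+1+1) = X from by rw [hXdef]; ring] at k'
    have e1 := bq_shift X m
    have e2 := bq_succ X m
    have e3 : X * bq (X-1) m = ((m:ℚ)+1) * bq X (m+1) := by linear_combination e1 - e2
    have hcast : ((r * (m+2) + 1 : ℕ) : ℚ) = X + 1 := by rw [hXdef]; push_cast; ring
    have goal' : X * bq (X+1) (m+2) = X * ((bq X (m+1) - r * bq (X-1) m) * (X+1)) := by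
      linear_combination ((r:ℚ)*(X+1))*e3 + (r:ℚ)*k'
    have h := mul_left_cancel₀ hXne goal'
    unfold fc
    rw [show r * (m+1+1) = r * (m+2) from by ring, ← bq_natCast, hcast]
    simp only [Aq]
    rw [show (r:ℚ) + (r:ℚ)*((m:ℚ)+1) = X from by rw [hXdef]; ring]
    rw [inv_mul_eq_div, div_eq_iff hX1]
    rw [show (m+1+1 : ℕ) = m+2 from rfl] at *
    linear_combination h

end FussCatAux
namespace FussCatAux

lemma coeff_pow (r s : ℕ) : ∀ n : ℕ,
    PowerSeries.coeff n ((PowerSeries.mk (fc r))^s) = Aq r (s:ℚ) n := by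
  induction s with
  | zero =>
    intro n
    rw [pow_zero, PowerSeries.coeff_one]
    cases n with
    | zero => simp [Aq_zero']
    | succ m => simp [Aq_a_zero]
  | succ s ih =>
    intro n
    rw [pow_succ, PowerSeries.coeff_mul, Finset.Nat.sum_antidiagonal_eq_sum_range_succ_mk]
    have : ∀ k ∈ Finset.range (n+1),
        PowerSeries.coeff k ((PowerSeries.mk (fc r))^s) * PowerSeries.coeff (n-k) (PowerSeries.mk (fc r))
          = Aq r 1 (n-k) * Aq r (s:ℚ) k := by
      intro k _
      rw [ih k, PowerSeries.coeff_mk, fc_eq_Aq_one]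
      ring
    rw [Finset.sum_congr rfl this, HR r n s 1]
    rw [show ((1:ℚ) + (s:ℚ)) = ((s+1:ℕ):ℚ) from by push_cast; ring]

end FussCatAux

/-- The generating function `G(z) = ∑_{n≥0} (1/(rn+1)) * C(rn+1, n) * z^n` of the
Fuss–Catalan numbers of order `r ≥ 1` satisfies the functional equation
`G(z) = 1 + z * G(z)^r` as formal power series. -/
theorem fussCatalan_generating_function (r : ℕ) (hr : 1 ≤ r) :
    (PowerSeries.mk fun n : ℕ =>
        ((r * n + 1 : ℕ) : ℚ)⁻¹ * (Nat.choose (r * n + 1) n : ℚ)) =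
      1 + PowerSeries.X *
        (PowerSeries.mk fun n : ℕ =>
          ((r * n + 1 : ℕ) : ℚ)⁻¹ * (Nat.choose (r * n + 1) n : ℚ)) ^ r := by
  have hG : (PowerSeries.mk fun n : ℕ =>
      ((r * n + 1 : ℕ) : ℚ)⁻¹ * (Nat.choose (r * n + 1) n : ℚ)) = PowerSeries.mk (FussCatAux.fc r) := rfl
  rw [hG]
  apply PowerSeries.ext
  intro n
  rw [map_add, PowerSeries.coeff_one]
  cases n with
  | zero =>
    simp [FussCatAux.fc_zero]
  | succ n =>
    rw [PowerSeries.coeff_succ_X_mul, FussCatAux.coeff_pow, PowerSeries.coeff_mk,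
      FussCatAux.fc_eq_Aq_r r hr n]
    simp
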